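/- Let d ≥ 1, let ψ be a vector in ℂ^d ⊗ ℂ^d, and let A, B be d×d complex matrices. Then det(Tr_B[(A ⊗ B) ψψ† (A ⊗ B)†]) = |det A|² · |det B|² · det(Tr_B(ψψ†)). In particular, the pure-state G-concurrence g(ψ) = d · (det Tr_B(ψψ†))^{1/d} satisfies g((A⊗B)ψ) = |det A|^{2/d} |det B|^{2/d} g(ψ). -/

import Mathlib

open Matrix Kronecker
open scoped Classical

noncomputable section

abbrev Idx (d : ℕ) := Fin d × Fin d

/-- Partial trace over the second factor. -/
def trB {d : ℕ} (M : Matrix (Idx d) (Idx d) ℂ) : Matrix (Fin d) (Fin d) ℂ :=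
  fun i j => ∑ k, M (i, k) (j, k)

/-- Rank-one projector-like matrix `ψψ†` on the bipartite space. -/
def outer {d : ℕ} (ψ : Idx d → ℂ) : Matrix (Idx d) (Idx d) ℂ :=
  Matrix.vecMulVec ψ (fun x => (starRingEnd ℂ) (ψ x))

/-- Pure-state G-concurrence `g(ψ) = d (det Tr_B ψψ†)^{1/d}`. -/
def gPure (d : ℕ) (ψ : Idx d → ℂ) : ℝ :=
  (d : ℝ) * ((trB (outer ψ)).det.re) ^ ((1 : ℝ) / d)

/-- Mixed-state G-concurrence via the convex roof. -/
def Gconc (d : ℕ) (ρ : Matrix (Idx d) (Idx d) ℂ) : ℝ :=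
  sInf { r : ℝ | ∃ (m : ℕ) (q : Fin m → ℝ) (ψ : Fin m → (Idx d → ℂ)),
    (∀ j, 0 ≤ q j) ∧ (∀ j, ∑ x, Complex.normSq (ψ j x) = 1) ∧
    ρ = ∑ j, (q j : ℂ) • outer (ψ j) ∧
    r = ∑ j, q j * gPure d (ψ j) }

/-- The swap unitary `V(x ⊗ y) = y ⊗ x`. -/
def swapV (d : ℕ) : Matrix (Idx d) (Idx d) ℂ :=
  fun x y => if x.1 = y.2 ∧ x.2 = y.1 then 1 else 0

def matOf {d : ℕ} (ψ : Idx d → ℂ) : Matrix (Fin d) (Fin d) ℂ := fun i k => ψ (i, k)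

lemma trB_outer {d : ℕ} (ψ : Idx d → ℂ) :
    trB (outer ψ) = matOf ψ * (matOf ψ)ᴴ := by
  ext i j
  simp [trB, outer, matOf, Matrix.mul_apply, Matrix.vecMulVec_apply,
    Matrix.conjTranspose_apply]

lemma outer_mulVec {d : ℕ} (M : Matrix (Idx d) (Idx d) ℂ) (ψ : Idx d → ℂ) :
    M * outer ψ * Mᴴ = outer (M.mulVec ψ) := by
  ext x y
  simp only [outer, Matrix.mul_apply, Matrix.vecMulVec_apply, Matrix.conjTranspose_apply,
    Matrix.mulVec, dotProduct, map_sum, Finset.sum_mul, Finset.mul_sum, _root_.map_mul,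
    starRingEnd_apply]
  congr 1; ext b; congr 1; ext a; ring

lemma matOf_mulVec {d : ℕ} (A B : Matrix (Fin d) (Fin d) ℂ) (ψ : Idx d → ℂ) :
    matOf ((A ⊗ₖ B).mulVec ψ) = A * matOf ψ * Bᵀ := by
  ext i k
  simp only [matOf, Matrix.mulVec, dotProduct, Matrix.mul_apply, Matrix.kroneckerMap_apply,
    Matrix.transpose_apply, Finset.sum_mul, Finset.mul_sum]
  rw [Fintype.sum_prod_type, Finset.sum_comm]
  congr 1; ext l; congr 1; ext j; ring

lemma mul_star_self (z : ℂ) : z * star z = ((‖z‖ ^ 2 : ℝ) : ℂ) := by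
  rw [Complex.star_def, Complex.mul_conj, Complex.sq_norm]

theorem gPure_of_product_operator
    (d : ℕ) (hd : 1 ≤ d) (ψ : Idx d → ℂ) (A B : Matrix (Fin d) (Fin d) ℂ) :
    (trB ((A ⊗ₖ B) * outer ψ * (A ⊗ₖ B)ᴴ)).det
      = ((‖A.det‖ ^ 2 * ‖B.det‖ ^ 2 : ℝ) : ℂ) * (trB (outer ψ)).det ∧
    gPure d ((A ⊗ₖ B).mulVec ψ)
      = ‖A.det‖ ^ ((2:ℝ)/d) * ‖B.det‖ ^ ((2:ℝ)/d) * gPure d ψ := by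
  set Ψ := matOf ψ with hΨ
  have key : (trB ((A ⊗ₖ B) * outer ψ * (A ⊗ₖ B)ᴴ)).det
      = ((‖A.det‖ ^ 2 * ‖B.det‖ ^ 2 : ℝ) : ℂ) * (trB (outer ψ)).det := by
    rw [outer_mulVec, trB_outer, matOf_mulVec, trB_outer, ← hΨ]
    simp only [Matrix.det_mul, Matrix.det_conjTranspose, Matrix.det_transpose]
    rw [show A.det * Ψ.det * B.det * star (A.det * Ψ.det * B.det)
        = (A.det * star A.det) * (B.det * star B.det) * (Ψ.det * star Ψ.det) by
      simp only [star_mul']; ring]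
    rw [mul_star_self, mul_star_self, mul_star_self]
    push_cast
    ring
  refine ⟨key, ?_⟩
  have hdet : (trB (outer ψ)).det = ((‖Ψ.det‖ ^ 2 : ℝ) : ℂ) := by
    rw [trB_outer, ← hΨ, Matrix.det_mul, Matrix.det_conjTranspose, mul_star_self]
  have hdet2 : (trB (outer ((A ⊗ₖ B).mulVec ψ))).det
      = ((‖A.det‖ ^ 2 * ‖B.det‖ ^ 2 * ‖Ψ.det‖ ^ 2 : ℝ) : ℂ) := by
    rw [← outer_mulVec, key, hdet]; push_cast; ring
  unfold gPure
  rw [hdet, hdet2]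
  simp only [Complex.ofReal_re]
  have ha : (0:ℝ) ≤ ‖A.det‖ := norm_nonneg _
  have hb : (0:ℝ) ≤ ‖B.det‖ := norm_nonneg _
  have hc : (0:ℝ) ≤ ‖Ψ.det‖ := norm_nonneg _
  have h2 : ∀ x : ℝ, 0 ≤ x → (x ^ 2) ^ ((1:ℝ)/d) = x ^ ((2:ℝ)/d) := fun x hx => by
    rw [← Real.rpow_natCast x 2, ← Real.rpow_mul hx]
    norm_num [div_eq_mul_inv]
  rw [Real.mul_rpow (by positivity) (by positivity),
    Real.mul_rpow (by positivity) (by positivity), h2 _ ha, h2 _ hb, h2 _ hc]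
  ring
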